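/- Consider X = ℝ with its usual metric and base point 0, so that *ℝ is Mathlib's Hyperreal and INF(ℝ,0) is exactly the set of infinite hyperreals. For any two infinite hyperreals x and y, x ≡ι y if and only if x and y have the same sign (0 < x ↔ 0 < y). Consequently INF(ℝ,0) has exactly two macrochain-connected components, i.e. ι(ℝ) = {+∞, −∞}. -/

import Mathlib

open Filter

/-- The nonstandard extension `*S` of a type `S`, realised as germs along the
hyperfilter on `ℕ` (a nonprincipal ultrafilter). -/
abbrev St (S : Type*) : Type _ := Filter.Germ (↑(Filter.hyperfilter ℕ) : Filter ℕ) S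

/-- `*d`, the componentwise lift of the distance to the nonstandard extension. -/
noncomputable def starDist {X : Type*} [PseudoMetricSpace X] (x y : St X) : St ℝ :=
  Filter.Germ.map₂ dist x y

/-- `x ∼ y` : two points of `*X` are finitely close if `*d x y ≤ *r` for some real `r`. -/
def FinClose {X : Type*} [PseudoMetricSpace X] (x y : St X) : Prop :=
  ∃ r : ℝ, starDist x y ≤ (↑r : St ℝ)

/-- `FIN(X,ξ)` : the points of `*X` finitely close to the base point. -/
def FIN {X : Type*} [PseudoMetricSpace X] (ξ : X) : Set (St X) :=
  {x | FinClose x (↑ξ : St X)}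

/-- `INF(X,ξ)` : the infinite points of `*X` relative to the base point. -/
def INF {X : Type*} [PseudoMetricSpace X] (ξ : X) : Set (St X) :=
  {x | ¬ FinClose x (↑ξ : St X)}

/-- A subset of a pseudometric space is bounded. -/
def BoundedSet {X : Type*} [PseudoMetricSpace X] (B : Set X) : Prop :=
  ∃ r : ℝ, ∀ a ∈ B, ∀ b ∈ B, dist a b ≤ r

/-- A map of pseudometric spaces is bornologous. -/
def Bornologous {X Y : Type*} [PseudoMetricSpace X] [PseudoMetricSpace Y] (f : X → Y) : Prop :=
  ∀ r : ℝ, ∃ s : ℝ, ∀ x x' : X, dist x x' ≤ r → dist (f x) (f x') ≤ s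

/-- `f` is proper at the base point `η`: preimages of bounded sets containing `η`
are bounded. -/
def ProperAt {X Y : Type*} [PseudoMetricSpace X] [PseudoMetricSpace Y]
    (f : X → Y) (η : Y) : Prop :=
  ∀ B : Set Y, η ∈ B → BoundedSet B → BoundedSet (f ⁻¹' B)

/-- `(N, s)` is an internal hyperfinite chain in `B ⊆ *X` from `x` to `y`. -/
def InternalChain {X : Type*} [PseudoMetricSpace X] (B : Set (St X)) (x y : St X)
    (N : ℕ → ℕ) (s : ℕ → ℕ → X) : Prop :=
  (↑(fun n => s n 0) : St X) = x ∧
  (↑(fun n => s n (N n)) : St X) = y ∧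
  (∀ g : ℕ → ℕ, (∀ᶠ n in (↑(Filter.hyperfilter ℕ) : Filter ℕ), g n ≤ N n) →
    (↑(fun n => s n (g n)) : St X) ∈ B) ∧
  (∀ g : ℕ → ℕ, (∀ᶠ n in (↑(Filter.hyperfilter ℕ) : Filter ℕ), g n < N n) →
    FinClose (↑(fun n => s n (g n)) : St X) (↑(fun n => s n (g n + 1)) : St X))

/-- `B ⊆ *X` is macrochain-connected. -/
def MacroChainConnected {X : Type*} [PseudoMetricSpace X] (B : Set (St X)) : Prop :=
  ∀ x ∈ B, ∀ y ∈ B, ∃ N s, InternalChain B x y N s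

/-- `x ≡ι y` : `x` and `y` are joined by an internal hyperfinite chain lying in `INF(X,ξ)`. -/
def IotaEquiv {X : Type*} [PseudoMetricSpace X] (ξ : X) (x y : St X) : Prop :=
  ∃ N s, InternalChain (INF ξ) x y N s

/-- An element of `*ℕ` is infinite. -/
def InfiniteHypernat (i : St ℕ) : Prop := ∀ m : ℕ, ¬ i ≤ (↑m : St ℕ)

/-- A coarse sequence : a bornologous and proper map `ℕ → X`. -/
def CoarseSeq {X : Type*} [PseudoMetricSpace X] (s : ℕ → X) : Prop :=
  (∀ k : ℕ, ∃ r : ℝ, ∀ m n : ℕ, Nat.dist m n ≤ k → dist (s m) (s n) ≤ r) ∧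
  (∀ B : Set X, BoundedSet B → (s ⁻¹' B).Finite)

/-- `s ⊑ t` for coarse sequences : `s` is a subsequence of `t`. -/
def SubCoarse {X : Type*} [PseudoMetricSpace X] (s t : ℕ → X) : Prop :=
  CoarseSeq s ∧ CoarseSeq t ∧ ∃ κ : ℕ → ℕ, StrictMono κ ∧ s = t ∘ κ

/-- `s ≡σ t` : the equivalence relation generated by `⊑` on coarse sequences. -/
def SigmaEquiv {X : Type*} [PseudoMetricSpace X] (s t : ℕ → X) : Prop :=
  Relation.EqvGen SubCoarse s t

/-- `(X, ξ)` is non-scattering at infinity. -/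
def NonScattering {X : Type*} [PseudoMetricSpace X] (ξ : X) : Prop :=
  ∃ r : ℝ, ∀ A : Set X, ξ ∈ A → BoundedSet A →
    ∀ x ∈ Aᶜ, ∀ y ∈ Aᶜ, ∃ n : ℕ, ∃ c : ℕ → X, c 0 = x ∧ c n = y ∧
      (∀ i ≤ n, c i ∈ Aᶜ) ∧ (∀ i < n, dist (c i) (c (i + 1)) ≤ r)
section Helpers

open Filter Filter.Germ
open scoped Classical


lemma starDist_coe (f g : ℕ → ℝ) :
    starDist (↑f : St ℝ) ↑g = (↑(fun n => |f n - g n|) : St ℝ) := by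
  show Filter.Germ.map₂ dist (↑f : St ℝ) ↑g = _
  rw [Filter.Germ.map₂_coe]
  exact congrArg Filter.Germ.ofFun (funext fun n => Real.dist_eq _ _)

lemma finClose_coe {f g : ℕ → ℝ} :
    FinClose (↑f : St ℝ) ↑g ↔ ∃ r : ℝ, ∀ᶠ n in (↑(Filter.hyperfilter ℕ) : Filter ℕ), |f n - g n| ≤ r := by
  unfold FinClose
  rw [starDist_coe]
  constructor <;> rintro ⟨r, hr⟩ <;> refine ⟨r, ?_⟩
  · exact Filter.Germ.coe_le.mp hr
  · exact Filter.Germ.coe_le.mpr hr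

lemma inf_coe {f : ℕ → ℝ} :
    (↑f : St ℝ) ∈ INF (0 : ℝ) ↔ ∀ r : ℝ, ∀ᶠ n in (↑(Filter.hyperfilter ℕ) : Filter ℕ), r < |f n| := by
  have h0 : ((0 : ℝ) : St ℝ) = (↑(fun _ : ℕ => (0 : ℝ)) : St ℝ) := rfl
  show ¬ FinClose _ _ ↔ _
  rw [h0, finClose_coe]
  push_neg
  constructor
  · intro h r
    have := h r
    · exact this.mono fun n hn => by simpa [not_le] using hn
  · intro h r
    exact (h r).mono fun n hn => by simpa [not_le] using hn

lemma finClose_symm {f g : ℕ → ℝ} (h : FinClose (↑f : St ℝ) ↑g) :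
    FinClose (↑g : St ℝ) ↑f := by
  rw [finClose_coe] at h ⊢
  obtain ⟨r, hr⟩ := h
  exact ⟨r, hr.mono fun n hn => by rwa [abs_sub_comm]⟩

lemma pos_coe {f : ℕ → ℝ} : 0 < (↑f : St ℝ) ↔ ∀ᶠ n in (↑(Filter.hyperfilter ℕ) : Filter ℕ), 0 < f n :=
  Filter.Germ.coe_pos

lemma nonpos_coe {f : ℕ → ℝ} : (↑f : St ℝ) ≤ 0 ↔ ∀ᶠ n in (↑(Filter.hyperfilter ℕ) : Filter ℕ), f n ≤ 0 := by
  have h0 : (0 : St ℝ) = (↑(fun _ : ℕ => (0 : ℝ)) : St ℝ) := rfl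
  rw [h0, Filter.Germ.coe_le]
  rfl

end Helpers

section Main

open Filter Filter.Germ
open scoped Classical

/-- Reversing an internal chain. -/
lemma chain_reverse {B : Set (St ℝ)} {x y : St ℝ} {N : ℕ → ℕ} {s : ℕ → ℕ → ℝ}
    (h : InternalChain B x y N s) :
    InternalChain B y x N (fun n i => s n (N n - i)) := by
  obtain ⟨h0, h1, hmem, hstep⟩ := h
  refine ⟨by simpa using h1, by simpa using h0, ?_, ?_⟩
  · intro g hg
    exact hmem (fun n => N n - g n) (Eventually.of_forall fun n => Nat.sub_le _ _)
  · intro g hg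
    have hstep' := hstep (fun n => N n - (g n + 1))
      (hg.mono fun n hn => show N n - (g n + 1) < N n by omega)
    have e1 : (↑(fun n => s n (N n - (g n + 1))) : St ℝ)
        = ↑(fun n => s n (N n - (g n + 1))) := rfl
    have e2 : (↑(fun n => s n (N n - (g n + 1) + 1)) : St ℝ)
        = (↑(fun n => s n (N n - g n)) : St ℝ) := by
      refine Filter.Germ.coe_eq.mpr (hg.mono fun n hn => ?_)
      show s n (N n - (g n + 1) + 1) = s n (N n - g n)
      congr 1; omega
    rw [e2] at hstep'
    exact finClose_symm hstep'

/-- A chain inside `INF 0` cannot join a positive element to a nonpositive one. -/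
lemma no_cross {x y : St ℝ} {N : ℕ → ℕ} {s : ℕ → ℕ → ℝ}
    (h : InternalChain (INF (0 : ℝ)) x y N s) (hx : 0 < x) (hy : y ≤ 0) : False := by
  obtain ⟨h0, h1, hmem, hstep⟩ := h
  have hx0 : ∀ᶠ n in (↑(Filter.hyperfilter ℕ) : Filter ℕ), 0 < s n 0 := by
    rw [← h0] at hx; exact pos_coe.mp hx
  have hy0 : ∀ᶠ n in (↑(Filter.hyperfilter ℕ) : Filter ℕ), s n (N n) ≤ 0 := by
    rw [← h1] at hy; exact nonpos_coe.mp hy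
  -- first index where the chain becomes nonpositive
  set g : ℕ → ℕ := fun n =>
    if hn : ∃ i, i ≤ N n ∧ s n i ≤ 0 then Nat.find hn else 0 with hgdef
  have hE : ∀ᶠ n in (↑(Filter.hyperfilter ℕ) : Filter ℕ),
      g n ≤ N n ∧ s n (g n) ≤ 0 ∧ 1 ≤ g n ∧ 0 < s n (g n - 1) ∧ g n - 1 ≤ N n := by
    filter_upwards [hx0, hy0] with n hpos hneg
    have hn : ∃ i, i ≤ N n ∧ s n i ≤ 0 := ⟨N n, le_rfl, hneg⟩
    have hg : g n = Nat.find hn := by rw [hgdef]; simp [hn]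
    have hspec := Nat.find_spec hn
    rw [← hg] at hspec
    have hg1 : 1 ≤ g n := by
      rcases Nat.eq_zero_or_pos (g n) with h' | h'
      · exfalso; rw [h'] at hspec; exact absurd hspec.2 (not_le.mpr hpos)
      · exact h'
    have hmin : ¬ (g n - 1 ≤ N n ∧ s n (g n - 1) ≤ 0) := by
      rw [hg]; exact Nat.find_min hn (by omega)
    have hle : g n - 1 ≤ N n := le_trans (Nat.sub_le _ _) hspec.1
    have : 0 < s n (g n - 1) := by
      by_contra hc; exact hmin ⟨hle, le_of_not_gt hc⟩
    exact ⟨hspec.1, hspec.2, hg1, this, hle⟩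
  have hh'lt : ∀ᶠ n in (↑(Filter.hyperfilter ℕ) : Filter ℕ), g n - 1 < N n :=
    hE.mono fun n hn => by omega
  have hu : (↑(fun n => s n (g n - 1)) : St ℝ) ∈ INF (0 : ℝ) :=
    hmem (fun n => g n - 1) (hh'lt.mono fun n hn => le_of_lt hn)
  have hfc := hstep (fun n => g n - 1) hh'lt
  rw [finClose_coe] at hfc
  obtain ⟨r, hr⟩ := hfc
  have hinf := inf_coe.mp hu r
  have : ∀ᶠ n in (↑(Filter.hyperfilter ℕ) : Filter ℕ), False := by
    filter_upwards [hE, hr, hinf] with n hn hrn hin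
    obtain ⟨_, hgle, hg1, hgpos, _⟩ := hn
    have e : g n - 1 + 1 = g n := by omega
    rw [e] at hrn
    have habs : |s n (g n - 1)| = s n (g n - 1) := abs_of_pos hgpos
    rw [habs] at hin
    have h2 : |s n (g n - 1) - s n (g n)| = s n (g n - 1) - s n (g n) := by
      apply abs_of_pos; linarith
    rw [h2] at hrn
    linarith
  exact (Filter.NeBot.ne (inferInstance : Filter.NeBot (↑(Filter.hyperfilter ℕ) : Filter ℕ)))
    (Filter.eventually_false_iff_eq_bot.mp this)

end Main

section Back

open Filter Filter.Germ

lemma convex_bound (a b t : ℝ) (h0 : 0 ≤ t) (h1 : t ≤ 1) :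
    min a b ≤ a + (b - a) * t ∧ a + (b - a) * t ≤ max a b := by
  rcases le_total a b with h | h
  · rw [min_eq_left h, max_eq_right h]; constructor <;> nlinarith
  · rw [min_eq_right h, max_eq_left h]; constructor <;> nlinarith

lemma same_sign_iota {x y : St ℝ} (hx : x ∈ INF (0 : ℝ)) (hy : y ∈ INF (0 : ℝ))
    (hsign : 0 < x ↔ 0 < y) : IotaEquiv (0 : ℝ) x y := by
  revert hx hy hsign
  refine Filter.Germ.inductionOn₂ x y fun a b => ?_
  intro hx hy hsign
  set Nf : ℕ → ℕ := fun n => ⌈|b n - a n|⌉₊ + 1 with hNf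
  have hNpos : ∀ n, (0 : ℝ) < (Nf n : ℝ) := fun n => by positivity
  refine ⟨Nf, fun n i => a n + (b n - a n) * i / (Nf n : ℝ), ?_, ?_, ?_, ?_⟩
  · refine Filter.Germ.coe_eq.mpr (Eventually.of_forall fun n => ?_)
    show a n + (b n - a n) * ((0 : ℕ) : ℝ) / (Nf n : ℝ) = a n
    push_cast; ring
  · refine Filter.Germ.coe_eq.mpr (Eventually.of_forall fun n => ?_)
    show a n + (b n - a n) * ((Nf n : ℕ) : ℝ) / (Nf n : ℝ) = b n
    have := (hNpos n).ne'
    field_simp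
    ring
  · intro g hg
    rw [inf_coe] at hx hy ⊢
    intro r
    set r' : ℝ := max r 0 with hr'
    have hbound : ∀ n, g n ≤ Nf n →
        min (a n) (b n) ≤ a n + (b n - a n) * (g n : ℝ) / (Nf n : ℝ) ∧
        a n + (b n - a n) * (g n : ℝ) / (Nf n : ℝ) ≤ max (a n) (b n) := by
      intro n hn
      have ht0 : (0 : ℝ) ≤ (g n : ℝ) / (Nf n : ℝ) := by positivity
      have ht1 : (g n : ℝ) / (Nf n : ℝ) ≤ 1 := by
        rw [div_le_one (hNpos n)]; exact_mod_cast hn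
      have := convex_bound (a n) (b n) ((g n : ℝ) / (Nf n : ℝ)) ht0 ht1
      constructor
      · calc min (a n) (b n) ≤ a n + (b n - a n) * ((g n : ℝ) / (Nf n : ℝ)) := this.1
          _ = a n + (b n - a n) * (g n : ℝ) / (Nf n : ℝ) := by ring
      · calc a n + (b n - a n) * (g n : ℝ) / (Nf n : ℝ)
            = a n + (b n - a n) * ((g n : ℝ) / (Nf n : ℝ)) := by ring
          _ ≤ max (a n) (b n) := this.2
    by_cases hp : 0 < (↑a : St ℝ)
    · have hq := hsign.mp hp
      filter_upwards [hx r', hy r', pos_coe.mp hp, pos_coe.mp hq, hg]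
        with n h1 h2 h3 h4 h5
      have ha' : r' < a n := by rw [abs_of_pos h3] at h1; exact h1
      have hb' : r' < b n := by rw [abs_of_pos h4] at h2; exact h2
      have hmin : r' < min (a n) (b n) := lt_min ha' hb'
      have := (hbound n h5).1
      have hrr : r ≤ r' := le_max_left _ _
      have : r' < a n + (b n - a n) * (g n : ℝ) / (Nf n : ℝ) := lt_of_lt_of_le hmin this
      have h0r : (0 : ℝ) ≤ r' := le_max_right _ _
      rw [abs_of_pos (lt_of_le_of_lt h0r this)]
      linarith
    · have hq : ¬ 0 < (↑b : St ℝ) := fun h => hp (hsign.mpr h)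
      have hpa : ∀ᶠ n in (↑(Filter.hyperfilter ℕ) : Filter ℕ), a n ≤ 0 :=
        nonpos_coe.mp (not_lt.mp hp)
      have hpb : ∀ᶠ n in (↑(Filter.hyperfilter ℕ) : Filter ℕ), b n ≤ 0 :=
        nonpos_coe.mp (not_lt.mp hq)
      filter_upwards [hx r', hy r', hpa, hpb, hg] with n h1 h2 h3 h4 h5
      have h0r : (0 : ℝ) ≤ r' := le_max_right _ _
      have ha' : a n < -r' := by rw [abs_of_nonpos h3] at h1; linarith
      have hb' : b n < -r' := by rw [abs_of_nonpos h4] at h2; linarith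
      have hmax : max (a n) (b n) < -r' := max_lt ha' hb'
      have hval := lt_of_le_of_lt (hbound n h5).2 hmax
      have hrr : r ≤ r' := le_max_left _ _
      rw [abs_of_nonpos (by linarith : a n + (b n - a n) * (g n : ℝ) / (Nf n : ℝ) ≤ 0)]
      linarith
  · intro g _
    rw [finClose_coe]
    refine ⟨1, Eventually.of_forall fun n => ?_⟩
    have hdiff : a n + (b n - a n) * (g n : ℝ) / (Nf n : ℝ)
        - (a n + (b n - a n) * ((g n + 1 : ℕ) : ℝ) / (Nf n : ℝ))
        = -((b n - a n) / (Nf n : ℝ)) := by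
      push_cast
      field_simp
      ring
    rw [hdiff, abs_neg, abs_div, abs_of_pos (hNpos n), div_le_one (hNpos n)]
    calc |b n - a n| ≤ (⌈|b n - a n|⌉₊ : ℝ) := Nat.le_ceil _
      _ ≤ (Nf n : ℝ) := by rw [hNf]; push_cast; linarith

end Back

/-- For the real line with base point `0`, two infinite hyperreals are `≡ι`-related iff
they have the same sign; and both signs occur, so `INF(ℝ,0)` has exactly two
macrochain-connected components, `ι(ℝ) = {+∞, -∞}`. -/
theorem iota_real_line :
    (∀ x y : St ℝ, x ∈ INF (0 : ℝ) → y ∈ INF (0 : ℝ) →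
      (IotaEquiv (0 : ℝ) x y ↔ (0 < x ↔ 0 < y))) ∧
    (∃ x ∈ INF (0 : ℝ), 0 < x) ∧ (∃ y ∈ INF (0 : ℝ), y < 0) := by
  have hcof : ∀ r : ℝ, ∀ᶠ (n : ℕ) in (↑(Filter.hyperfilter ℕ) : Filter ℕ), r < (n : ℝ) := by
    intro r
    obtain ⟨m, hm⟩ := exists_nat_gt r
    have : ∀ᶠ (n : ℕ) in Filter.cofinite, r < (n : ℝ) := by
      rw [Nat.cofinite_eq_atTop]
      filter_upwards [Filter.eventually_ge_atTop m] with n hn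
      exact lt_of_lt_of_le hm (by exact_mod_cast hn)
    exact this.filter_mono (Filter.hyperfilter_le_cofinite)
  refine ⟨?_, ?_, ?_⟩
  · intro x y hx hy
    constructor
    · rintro ⟨N, s, hc⟩
      by_cases h1 : 0 < x <;> by_cases h2 : 0 < y
      · exact iff_of_true h1 h2
      · exact absurd (no_cross hc h1 (not_lt.mp h2)) (fun h => h)
      · exact absurd (no_cross (chain_reverse hc) h2 (not_lt.mp h1)) (fun h => h)
      · exact iff_of_false h1 h2
    · intro hsign
      exact same_sign_iota hx hy hsign
  · refine ⟨(↑(fun n : ℕ => (n : ℝ)) : St ℝ), ?_, ?_⟩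
    · rw [inf_coe]
      intro r
      filter_upwards [hcof (max r 0)] with n hn
      rw [abs_of_nonneg (by positivity)]
      exact lt_of_le_of_lt (le_max_left _ _) hn
    · exact pos_coe.mpr ((hcof 0).mono fun n hn => hn)
  · refine ⟨(↑(fun n : ℕ => -(n : ℝ)) : St ℝ), ?_, ?_⟩
    · rw [inf_coe]
      intro r
      filter_upwards [hcof (max r 0)] with n hn
      rw [abs_neg, abs_of_nonneg (by positivity)]
      exact lt_of_le_of_lt (le_max_left _ _) hn
    · have h0 : ((0 : ℝ) : St ℝ) = (0 : St ℝ) := rfl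
      have : (↑(fun n : ℕ => -(n : ℝ)) : St ℝ) < ↑(fun _ : ℕ => (0 : ℝ)) :=
        Filter.Germ.coe_lt.mpr ((hcof 0).mono fun n hn => by simpa using hn)
      exact this
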